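/- Let ψ : ℕ → ℕ be a function such that for every integer c ≥ 0 and every tournament G with χ(G) ≥ ψ(c) there exists a vertex v of G with χ(N⁺(v)) ≥ c. Then for every integer c ≥ 0 and every tournament G with χ(G) ≥ 2ψ(c), there exists a vertex v of G with χ(N⁺(v)) ≥ c and χ(N⁻(v)) ≥ c. -/

import Mathlib

structure Tournament where
  V : Type
  fintype : Fintype V
  adj : V → V → Prop
  asymm : ∀ u v, adj u v → ¬ adj v u
  total : ∀ u v, u ≠ v → adj u v ∨ adj v u

attribute [instance] Tournament.fintype

namespace Tournament

/-- A set of vertices is transitive if it includes no cyclic triangle. -/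
def IsTransitiveSet (T : Tournament) (A : Set T.V) : Prop :=
  ∀ a ∈ A, ∀ b ∈ A, ∀ c ∈ A, T.adj a b → T.adj b c → ¬ T.adj c a

/-- The chromatic number of the subtournament induced on `A`. -/
noncomputable def chiOn (T : Tournament) (A : Set T.V) : ℕ :=
  sInf {k | ∃ C : Fin k → Set T.V, (∀ i, T.IsTransitiveSet (C i)) ∧ A ⊆ ⋃ i, C i}

noncomputable def chi (T : Tournament) : ℕ := T.chiOn Set.univ

def outN (T : Tournament) (v : T.V) : Set T.V := {u | T.adj v u}
def inN (T : Tournament) (v : T.V) : Set T.V := {u | T.adj u v}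

/-- The domination number of the subtournament induced on `A`. -/
noncomputable def domOn (T : Tournament) (A : Set T.V) : ℕ :=
  sInf {n | ∃ X : Finset T.V, ↑X ⊆ A ∧ (∀ v ∈ A, v ∉ X → ∃ x ∈ X, T.adj x v) ∧ X.card = n}

noncomputable def dom (T : Tournament) : ℕ := T.domOn Set.univ

/-- `A ⇒ B`: every edge between `A` and `B` is directed from `A` to `B`. -/
def CompleteTo (T : Tournament) (A B : Set T.V) : Prop :=
  ∀ a ∈ A, ∀ b ∈ B, T.adj a b

def CompletePair (T : Tournament) (A B : Set T.V) : Prop :=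
  Disjoint A B ∧ T.CompleteTo A B

/-- `G` has a subtournament inside `A` isomorphic to `H`. -/
def ContainsOn (G : Tournament) (A : Set G.V) (H : Tournament) : Prop :=
  ∃ f : H.V → G.V, Function.Injective f ∧ (∀ u, f u ∈ A) ∧
    ∀ u v, H.adj u v ↔ G.adj (f u) (f v)

def Contains (G H : Tournament) : Prop := G.ContainsOn Set.univ H

def IsHero (H : Tournament) : Prop :=
  ∃ c > 0, ∀ G : Tournament, ¬ G.Contains H → G.chi < c

def IsRebel (H : Tournament) : Prop :=
  ∃ c > 0, ∀ G : Tournament, ¬ G.Contains H → G.dom < c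

lemma colorSet_nonempty (T : Tournament) (A : Set T.V) :
    {k | ∃ C : Fin k → Set T.V, (∀ i, T.IsTransitiveSet (C i)) ∧ A ⊆ ⋃ i, C i}.Nonempty := by
  refine ⟨Fintype.card T.V, fun i => {(Fintype.equivFin T.V).symm i}, ?_, ?_⟩
  · intro i a ha b hb c hc hab _
    simp only [Set.mem_singleton_iff] at ha hb
    subst ha; subst hb
    exact (T.asymm _ _ hab hab).elim
  · intro v _
    exact Set.mem_iUnion.2 ⟨Fintype.equivFin T.V v, by simp⟩

lemma chiOn_le (T : Tournament) {A : Set T.V} {k : ℕ} (C : Fin k → Set T.V)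
    (h1 : ∀ i, T.IsTransitiveSet (C i)) (h2 : A ⊆ ⋃ i, C i) : T.chiOn A ≤ k :=
  Nat.sInf_le ⟨C, h1, h2⟩

lemma chiOn_spec (T : Tournament) (A : Set T.V) :
    ∃ C : Fin (T.chiOn A) → Set T.V, (∀ i, T.IsTransitiveSet (C i)) ∧ A ⊆ ⋃ i, C i :=
  Nat.sInf_mem (T.colorSet_nonempty A)

lemma chiOn_mono (T : Tournament) {A B : Set T.V} (h : A ⊆ B) : T.chiOn A ≤ T.chiOn B := by
  obtain ⟨C, h1, h2⟩ := T.chiOn_spec B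
  exact T.chiOn_le C h1 (h.trans h2)

lemma chi_le_union (T : Tournament) {S U : Set T.V} (h : Set.univ ⊆ S ∪ U) :
    T.chi ≤ T.chiOn S + T.chiOn U := by
  obtain ⟨C, hC1, hC2⟩ := T.chiOn_spec S
  obtain ⟨D, hD1, hD2⟩ := T.chiOn_spec U
  refine T.chiOn_le (Fin.append C D) ?_ ?_
  · intro i
    refine Fin.addCases (fun j => ?_) (fun j => ?_) i
    · simpa [Fin.append_left] using hC1 j
    · simpa [Fin.append_right] using hD1 j
  · intro v hv
    rcases h hv with hvS | hvU
    · obtain ⟨i, hi⟩ := Set.mem_iUnion.1 (hC2 hvS)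
      exact Set.mem_iUnion.2 ⟨Fin.castAdd _ i, by simpa [Fin.append_left] using hi⟩
    · obtain ⟨i, hi⟩ := Set.mem_iUnion.1 (hD2 hvU)
      exact Set.mem_iUnion.2 ⟨Fin.natAdd _ i, by simpa [Fin.append_right] using hi⟩

noncomputable def induced (G : Tournament) (A : Set G.V) : Tournament where
  V := ↥A
  fintype := Fintype.ofFinite _
  adj u v := G.adj u v
  asymm _ _ h := G.asymm _ _ h
  total _ _ h := G.total _ _ fun e => h (Subtype.ext e)

lemma chiOn_image (G : Tournament) (A : Set G.V) (B : Set (G.induced A).V) :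
    G.chiOn (Subtype.val '' B) ≤ (G.induced A).chiOn B := by
  obtain ⟨C, h1, h2⟩ := (G.induced A).chiOn_spec B
  refine G.chiOn_le (fun i => Subtype.val '' C i) ?_ ?_
  · rintro i a ⟨a', ha', rfl⟩ b ⟨b', hb', rfl⟩ c ⟨c', hc', rfl⟩ hab hbc
    exact h1 i a' ha' b' hb' c' hc' hab hbc
  · rintro x ⟨x', hx', rfl⟩
    obtain ⟨i, hi⟩ := Set.mem_iUnion.1 (h2 hx')
    exact Set.mem_iUnion.2 ⟨i, ⟨x', hi, rfl⟩⟩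

lemma chiOn_restrict (G : Tournament) (A : Set G.V) (B : Set (G.induced A).V) :
    (G.induced A).chiOn B ≤ G.chiOn (Subtype.val '' B) := by
  obtain ⟨C, h1, h2⟩ := G.chiOn_spec (Subtype.val '' B)
  refine (G.induced A).chiOn_le (fun i => Subtype.val ⁻¹' C i) ?_ ?_
  · intro i a ha b hb c hc hab hbc
    exact h1 i _ ha _ hb _ hc hab hbc
  · intro b hb
    obtain ⟨i, hi⟩ := Set.mem_iUnion.1 (h2 ⟨b, hb, rfl⟩)
    exact Set.mem_iUnion.2 ⟨i, hi⟩

def rev (G : Tournament) : Tournament where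
  V := G.V
  fintype := G.fintype
  adj u v := G.adj v u
  asymm _ _ h h' := G.asymm _ _ h' h
  total u v h := (G.total u v h).symm

lemma rev_isTransitiveSet (G : Tournament) (A : Set G.V) :
    G.rev.IsTransitiveSet A ↔ G.IsTransitiveSet A := by
  constructor
  · intro h a ha b hb c hc hab hbc hca
    exact h a ha c hc b hb hca hbc hab
  · intro h a ha b hb c hc hab hbc hca
    exact h a ha c hc b hb hca hbc hab

lemma rev_chiOn (G : Tournament) (A : Set G.V) : G.rev.chiOn A = G.chiOn A := by
  unfold chiOn
  congr 1
  ext k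
  constructor
  · rintro ⟨C, h1, h2⟩
    exact ⟨C, fun i => (G.rev_isTransitiveSet (C i)).1 (h1 i), h2⟩
  · rintro ⟨C, h1, h2⟩
    exact ⟨C, fun i => (G.rev_isTransitiveSet (C i)).2 (h1 i), h2⟩

def emptyT : Tournament where
  V := Empty
  fintype := inferInstance
  adj _ _ := False
  asymm u _ _ := u.elim
  total u := u.elim

end Tournament

/-- If every tournament with chromatic number at least `ψ c` has a vertex whose
out-neighbourhood has chromatic number at least `c`, then every tournament with
chromatic number at least `2·ψ c` has a vertex `v` with both `χ(N⁺(v)) ≥ c` and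
`χ(N⁻(v)) ≥ c`. -/
theorem in_and_out (ψ : ℕ → ℕ)
    (hψ : ∀ c : ℕ, ∀ G : Tournament, ψ c ≤ G.chi →
      ∃ v : G.V, c ≤ G.chiOn (G.outN v)) :
    ∀ c : ℕ, ∀ G : Tournament, 2 * ψ c ≤ G.chi →
      ∃ v : G.V, c ≤ G.chiOn (G.outN v) ∧ c ≤ G.chiOn (G.inN v) := by
  intro c G hG
  set S : Set G.V := {v | c ≤ G.chiOn (G.outN v)} with hSdef
  set U : Set G.V := Sᶜ with hUdef
  -- the complement of S has small chromatic number
  have hU : G.chiOn U < ψ c := by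
    by_contra h
    push_neg at h
    have h1 : ψ c ≤ (G.induced U).chi := by
      have h2 := G.chiOn_image U Set.univ
      have e : Subtype.val '' (Set.univ : Set (G.induced U).V) = U := Subtype.coe_image_univ U
      rw [e] at h2
      exact h.trans h2
    obtain ⟨v, hv⟩ := hψ c (G.induced U) h1
    have hmem : (v.1 : G.V) ∈ S := by
      have hsub : Subtype.val '' ((G.induced U).outN v) ⊆ G.outN v.1 := by
        rintro x ⟨x', hx', rfl⟩
        exact hx'
      calc c ≤ (G.induced U).chiOn ((G.induced U).outN v) := hv
        _ ≤ G.chiOn (Subtype.val '' ((G.induced U).outN v)) := G.chiOn_restrict U _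
        _ ≤ G.chiOn (G.outN v.1) := G.chiOn_mono hsub
    exact v.2 hmem
  have hcover : Set.univ ⊆ S ∪ U := by
    intro v _
    by_cases h : v ∈ S
    · exact Or.inl h
    · exact Or.inr h
  have hchain : 2 * ψ c ≤ G.chiOn S + G.chiOn U := hG.trans (G.chi_le_union hcover)
  have hSbig : ψ c ≤ G.chiOn S := by omega
  -- apply the hypothesis to the reverse of the tournament induced on S
  have h1 : ψ c ≤ (G.induced S).rev.chi := by
    have h2 := G.chiOn_image S Set.univ
    have e : Subtype.val '' (Set.univ : Set (G.induced S).V) = S := Subtype.coe_image_univ S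
    rw [e] at h2
    have h2' : G.chiOn S ≤ (G.induced S).chi := h2
    have h3 : (G.induced S).rev.chi = (G.induced S).chi :=
      (G.induced S).rev_chiOn Set.univ
    omega
  obtain ⟨v, hv⟩ := hψ c ((G.induced S).rev) h1
  refine ⟨v.1, v.2, ?_⟩
  have heq : (G.induced S).rev.outN v = (G.induced S).inN v := rfl
  rw [heq, (G.induced S).rev_chiOn] at hv
  have hsub : Subtype.val '' ((G.induced S).inN v) ⊆ G.inN v.1 := by
    rintro x ⟨x', hx', rfl⟩
    exact hx'
  calc c ≤ (G.induced S).chiOn ((G.induced S).inN v) := hv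
    _ ≤ G.chiOn (Subtype.val '' ((G.induced S).inN v)) := G.chiOn_restrict S _
    _ ≤ G.chiOn (G.inN v.1) := G.chiOn_mono hsub
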